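/- For all n ≥ 1, 2^n − C(n, ⌊n/2⌋) = Σ_{k=0}^{n−1} C(k, ⌊k/2⌋)·C(n−k−1, ⌊(n−k−1)/2⌋). -/

import Mathlib

inductive DStep | up | down | right
deriving DecidableEq, Repr

instance : Fintype DStep where
  elems := {DStep.up, DStep.down, DStep.right}
  complete := fun x => by cases x <;> simp

/-- Run a dispersed Dyck path from height `h`; `none` if an illegal step occurs,
otherwise the final height. Down steps require positive height; right steps require height 0. -/
def DStep.run : ℕ → List DStep → Option ℕ
  | h, [] => some h
  | h, .up :: l => DStep.run (h + 1) l
  | h + 1, .down :: l => DStep.run h l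
  | 0, .down :: _ => none
  | 0, .right :: l => DStep.run 0 l
  | _ + 1, .right :: _ => none

/-- A dispersed Dyck path: starts and ends at height 0, all steps legal. -/
def IsDDP (l : List DStep) : Prop := DStep.run 0 l = some 0

instance : DecidablePred IsDDP := fun l => by unfold IsDDP; infer_instance

/-- The finset of all dispersed Dyck paths of length `n`. -/
def DDPs (n : ℕ) : Finset (List.Vector DStep n) :=
  Finset.univ.filter (fun v => IsDDP v.toList)

/-- Number of dispersed Dyck paths of length `n`. -/
def dD (n : ℕ) : ℕ := (DDPs n).card

/-- Total number of up steps over all DDPs of length `n`. -/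
def U (n : ℕ) : ℕ := ∑ v ∈ DDPs n, v.toList.count DStep.up

/-- Total number of down steps over all DDPs of length `n`. -/
def D (n : ℕ) : ℕ := ∑ v ∈ DDPs n, v.toList.count DStep.down

/-- Total number of right steps over all DDPs of length `n`. -/
def R (n : ℕ) : ℕ := ∑ v ∈ DDPs n, v.toList.count DStep.right

/-- `i` is the position of a 1-ascent in `l`: an up step with no adjacent up step. -/
def IsOneAscentAt (l : List DStep) (i : ℕ) : Prop :=
  l[i]? = some .up ∧ l[i + 1]? ≠ some .up ∧ (i = 0 ∨ l[i - 1]? ≠ some .up)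

instance (l : List DStep) : DecidablePred (IsOneAscentAt l) := fun i => by
  unfold IsOneAscentAt; infer_instance

/-- Number of 1-ascents in `l`. -/
def oneAsc (l : List DStep) : ℕ :=
  ((Finset.range l.length).filter (IsOneAscentAt l)).card

/-- Total number of 1-ascents over all DDPs of length `n`. -/
def A (n : ℕ) : ℕ := ∑ v ∈ DDPs n, oneAsc v.toList

/-- Signed final height of a plain path (ignoring any right steps). -/
def psum : List DStep → ℤ
  | [] => 0
  | .up :: l => 1 + psum l
  | .down :: l => -1 + psum l
  | .right :: l => psum l


private def fc (n : ℕ) : ℕ := n.choose (n / 2)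
private def cc (n : ℕ) : ℕ := if n % 2 = 0 then catalan (n / 2) else 0

private lemma lemA (m : ℕ) : (2*(m+1)).choose m * (m+2) = (m+1) * (2*(m+1)).choose (m+1) := by
  have h := Nat.choose_succ_right_eq (2*(m+1)) m
  have : 2*(m+1) - m = m + 2 := by omega
  rw [this] at h
  rw [← h]; ring

private lemma lemB (m : ℕ) : (2*(m+1)).choose m = (m+1) * catalan (m+1) := by
  have hA := lemA m
  have hC := succ_mul_catalan_eq_centralBinom (m+1)
  unfold Nat.centralBinom at hC
  have : (2*(m+1)).choose m * (m+2) = ((m+1) * catalan (m+1)) * (m+2) := by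
    rw [hA]; rw [← hC]; ring
  exact Nat.eq_of_mul_eq_mul_right (by omega) this

private lemma lemL1 (m : ℕ) : (2*m+1).choose m + catalan m = 2 * (2*m).choose m := by
  cases m with
  | zero => simp
  | succ j =>
    have hp : (2*(j+1)+1).choose (j+1) = (2*(j+1)).choose j + (2*(j+1)).choose (j+1) :=
      Nat.choose_succ_succ _ _
    have hB := lemB j
    have hC := succ_mul_catalan_eq_centralBinom (j+1)
    unfold Nat.centralBinom at hC
    rw [hp, hB, ← hC]; ring

private lemma lemL2 (m : ℕ) : (2*m+2).choose (m+1) = 2 * ((2*m+1).choose m) := by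
  have hp : (2*m+2).choose (m+1) = (2*m+1).choose m + (2*m+1).choose (m+1) := by
    have := Nat.choose_succ_succ (2*m+1) m
    convert this using 2 <;> omega
  -- removed stray
  rw [hp, Nat.choose_symm_half]; omega

private lemma lemLc (j : ℕ) : fc (j+1) + cc j = 2 * fc j := by
  rcases Nat.even_or_odd j with ⟨m, hm⟩ | ⟨m, hm⟩
  · subst hm
    have h1 : (m + m + 1) / 2 = m := by omega
    have h2 : (m + m) / 2 = m := by omega
    have h3 : (m + m) % 2 = 0 := by omega
    simpa [fc, cc, h1, h2, h3, Nat.two_mul] using lemL1 m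
  · subst hm
    have h1 : (2*m+1+1) / 2 = m+1 := by omega
    have h2 : (2*m+1) / 2 = m := by omega
    have h3 : (2*m+1) % 2 = 1 := by omega
    simp [fc, cc, h1, h2, h3]
    exact lemL2 m

private def Tsum (n : ℕ) : ℕ := ∑ m ∈ Finset.range ((n+1)/2), catalan m * fc (n-1-2*m)

private lemma lemT : ∀ n, fc n = cc n + Tsum n := by
  intro n
  induction n with
  | zero => simp [fc, cc, Tsum]
  | succ n ih =>
    rcases Nat.even_or_odd n with ⟨M, hM⟩ | ⟨M, hM⟩
    · -- n = 2M, prove T(2M+1)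
      subst hM
      have hn : M + M = 2 * M := by omega
      rw [hn] at ih ⊢
      have hr1 : (2*M+1+1)/2 = M + 1 := by omega
      have hr2 : (2*M+1)/2 = M := by omega
      have hcc : cc (2*M+1) = 0 := by simp only [cc]; rw [if_neg (by omega)]
      have hsum : Tsum (2*M+1) = (∑ m ∈ Finset.range M, catalan m * fc (2*M+1-1-2*m))
          + catalan M * fc (2*M+1-1-2*M) := by
        rw [Tsum, hr1, Finset.sum_range_succ]
      have hlast : (2*M+1-1-2*M) = 0 := by omega
      have hterm : ∀ m ∈ Finset.range M, catalan m * fc (2*M+1-1-2*m)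
          = 2 * (catalan m * fc (2*M-1-2*m)) := by
        intro m hm
        rw [Finset.mem_range] at hm
        have e1 : 2*M+1-1-2*m = 2*(M-m-1)+2 := by omega
        have e2 : 2*M-1-2*m = 2*(M-m-1)+1 := by omega
        have hfc1 : fc (2*(M-m-1)+2) = 2 * fc (2*(M-m-1)+1) := by
          have h1 : (2*(M-m-1)+2)/2 = (M-m-1)+1 := by omega
          have h2 : (2*(M-m-1)+1)/2 = M-m-1 := by omega
          simp only [fc, h1, h2]
          exact lemL2 (M-m-1)
        rw [e1, e2, hfc1]; ring
      have hsum2 : (∑ m ∈ Finset.range M, catalan m * fc (2*M+1-1-2*m))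
          = 2 * Tsum (2*M) := by
        rw [Finset.sum_congr rfl hterm, ← Finset.mul_sum, Tsum, hr2]
      have hcc2 : cc (2*M) = catalan M := by
        simp only [cc]; rw [if_pos (by omega)]; congr 1; omega
      have hL1 : fc (2*M+1) + catalan M = 2 * fc (2*M) := by
        have := lemLc (2*M)
        rwa [hcc2] at this
      have hfc0 : fc 0 = 1 := by simp [fc]
      rw [hcc, hsum, hsum2, hlast, hfc0]
      rw [hcc2] at ih
      omega
    · -- n = 2M+1, prove T(2M+2)
      subst hM
      have hr1 : (2*M+1+1+1)/2 = M + 1 := by omega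
      have hr2 : (2*M+1+1)/2 = M + 1 := by omega
      have hcc : cc (2*M+1+1) = catalan (M+1) := by
        simp only [cc]; rw [if_pos (by omega), show (2*M+1+1)/2 = M+1 from by omega]
      have hterm : ∀ m ∈ Finset.range (M+1),
          catalan m * fc (2*M+1+1-1-2*m) + catalan m * catalan (M - m)
          = 2 * (catalan m * fc (2*M+1-1-2*m)) := by
        intro m hm
        rw [Finset.mem_range] at hm
        have e1 : 2*M+1+1-1-2*m = 2*(M-m)+1 := by omega
        have e2 : 2*M+1-1-2*m = 2*(M-m) := by omega
        have hL1 : fc (2*(M-m)+1) + catalan (M-m) = 2 * fc (2*(M-m)) := by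
          have h1 : (2*(M-m)+1)/2 = M-m := by omega
          have h2 : (2*(M-m))/2 = M-m := by omega
          simp only [fc, h1, h2]
          exact lemL1 (M-m)
        rw [e1, e2]
        calc catalan m * fc (2*(M-m)+1) + catalan m * catalan (M-m)
            = catalan m * (fc (2*(M-m)+1) + catalan (M-m)) := by ring
          _ = catalan m * (2 * fc (2*(M-m))) := by rw [hL1]
          _ = 2 * (catalan m * fc (2*(M-m))) := by ring
      have hcat : ∑ m ∈ Finset.range (M+1), catalan m * catalan (M-m) = catalan (M+1) := by
        rw [catalan_succ M]
        exact (Fin.sum_univ_eq_sum_range (fun i => catalan i * catalan (M - i)) (M+1)).symm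
      have hsum : Tsum (2*M+1+1) + catalan (M+1) = 2 * Tsum (2*M+1) := by
        rw [Tsum, Tsum, hr1, hr2, ← hcat, ← Finset.sum_add_distrib, Finset.mul_sum]
        exact Finset.sum_congr rfl hterm
      have hL2 : fc (2*M+1+1) = 2 * fc (2*M+1) := by
        have := lemLc (2*M+1)
        have hcc0 : cc (2*M+1) = 0 := by simp only [cc]; rw [if_neg (by omega)]
        rw [hcc0] at this; omega
      have hcc0 : cc (2*M+1) = 0 := by simp only [cc]; rw [if_neg (by omega)]
      rw [hcc0] at ih
      omega

private lemma lemR (n : ℕ) : ∑ k ∈ Finset.range n, fc k * cc (n-1-k) = Tsum n := by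
  rw [Tsum]
  have step1 : (∑ k ∈ Finset.range n, fc k * cc (n-1-k))
      = ∑ k ∈ (Finset.range n).filter (fun k => (n-1-k) % 2 = 0),
          fc k * catalan ((n-1-k)/2) := by
    rw [Finset.sum_filter]
    refine Finset.sum_congr rfl fun k hk => ?_
    simp only [cc]
    split <;> simp
  rw [step1]
  refine Finset.sum_nbij' (i := fun k => (n-1-k)/2) (j := fun m => n-1-2*m)
    ?_ ?_ ?_ ?_ ?_
  · intro k hk
    simp only [Finset.mem_filter, Finset.mem_range] at hk ⊢
    omega
  · intro m hm
    simp only [Finset.mem_filter, Finset.mem_range] at hm ⊢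
    omega
  · intro k hk
    simp only [Finset.mem_filter, Finset.mem_range] at hk
    show n-1-2*((n-1-k)/2) = k
    omega
  · intro m hm
    simp only [Finset.mem_range] at hm
    show (n-1-(n-1-2*m))/2 = m
    omega
  · intro k hk
    simp only [Finset.mem_filter, Finset.mem_range] at hk
    have : n-1-2*((n-1-k)/2) = k := by omega
    rw [this, mul_comm]

private lemma lemM : ∀ n, (∑ k ∈ Finset.range n, fc k * fc (n-1-k)) + fc n = 2 ^ n := by
  intro n
  induction n with
  | zero => simp [fc]
  | succ n ih =>
    have hsplit : (∑ k ∈ Finset.range (n+1), fc k * fc (n+1-1-k))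
        = (∑ k ∈ Finset.range n, fc k * fc (n-k)) + fc n := by
      rw [Finset.sum_range_succ]
      congr 1
      · rw [show n+1-1-n = 0 from by omega]
        simp [fc]
      all_goals exact Finset.sum_congr rfl fun k hk => by rw [show n+1-1-k = n-k from by omega]
    have hterm : ∀ k ∈ Finset.range n,
        fc k * fc (n-k) + fc k * cc (n-1-k) = 2 * (fc k * fc (n-1-k)) := by
      intro k hk
      rw [Finset.mem_range] at hk
      have e : n - k = (n-1-k)+1 := by omega
      rw [e]
      calc fc k * fc ((n-1-k)+1) + fc k * cc (n-1-k)
          = fc k * (fc ((n-1-k)+1) + cc (n-1-k)) := by ring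
        _ = fc k * (2 * fc (n-1-k)) := by rw [lemLc]
        _ = 2 * (fc k * fc (n-1-k)) := by ring
    have hsums : (∑ k ∈ Finset.range n, fc k * fc (n-k)) + Tsum n
        = 2 * ∑ k ∈ Finset.range n, fc k * fc (n-1-k) := by
      rw [← lemR n, ← Finset.sum_add_distrib, Finset.mul_sum]
      exact Finset.sum_congr rfl hterm
    have hT := lemT n
    have hLc := lemLc n
    rw [hsplit, pow_succ]
    omega

/-- For `n ≥ 1`, `2^n − C(n,⌊n/2⌋) = Σ_{k=0}^{n−1} C(k,⌊k/2⌋)·C(n−k−1,⌊(n−k−1)/2⌋)`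
(OEIS A045621). -/
theorem A045621_identity (n : ℕ) (hn : 1 ≤ n) :
    2 ^ n - n.choose (n / 2) =
      ∑ k ∈ Finset.range n, k.choose (k / 2) * (n - k - 1).choose ((n - k - 1) / 2) := by
  have hM := lemM n
  have : (∑ k ∈ Finset.range n, fc k * fc (n-1-k))
      = ∑ k ∈ Finset.range n, k.choose (k / 2) * (n - k - 1).choose ((n - k - 1) / 2) := by
    refine Finset.sum_congr rfl fun k hk => ?_
    simp only [fc]
    rw [show n-1-k = n-k-1 from by omega]
  rw [← this]
  have : fc n = n.choose (n/2) := rfl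
  omega
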